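/- Let S and K be nonempty open bounded intervals of ℝ, let h > 0, and let e ∈ L²(S,ℝ²) with e not in the range b₂*[L²(K)]. If (φ_n) is a sequence in L²(K) such that ‖b₂*[φ_n] − e‖_{L²(S,ℝ²)} → 0 as n → ∞, then ‖φ_n‖_{L²(K)} → ∞; that is, the unconstrained approximation problem is ill-posed and any minimizing sequence diverges in norm. -/

import Mathlib

open MeasureTheory

/-- Poisson kernel of the upper half-plane at height `y`. -/
noncomputable def Pker (y x : ℝ) : ℝ := (1 / Real.pi) * y / (x ^ 2 + y ^ 2)

/-- Conjugate Poisson kernel at height `y`. -/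
noncomputable def Qker (y x : ℝ) : ℝ := (1 / Real.pi) * x / (x ^ 2 + y ^ 2)

/-- Partial derivative in `x` of the Poisson kernel. -/
noncomputable def dPdx (y x : ℝ) : ℝ := -(1 / Real.pi) * (2 * x * y) / (x ^ 2 + y ^ 2) ^ 2

/-- Partial derivative in `y` of the Poisson kernel. -/
noncomputable def dPdy (y x : ℝ) : ℝ := (1 / Real.pi) * (x ^ 2 - y ^ 2) / (x ^ 2 + y ^ 2) ^ 2

/-- Partial derivative in `x` of the conjugate Poisson kernel. -/
noncomputable def dQdx (y x : ℝ) : ℝ := (1 / Real.pi) * (y ^ 2 - x ^ 2) / (x ^ 2 + y ^ 2) ^ 2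

/-- Convolution on `ℝ`: `(k ⋆ g) x = ∫ k (x - t) * g t dt`. -/
noncomputable def conv (k g : ℝ → ℝ) (x : ℝ) : ℝ := ∫ t, k (x - t) * g t

open Filter Set Topology
open scoped ENNReal

section Aux

/-- Continuity of `dPdx h`. -/
lemma dPdx_continuous {h : ℝ} (hh : 0 < h) : Continuous (dPdx h) := by
  unfold dPdx
  refine Continuous.div (by continuity) (by continuity) (fun x => ?_)
  positivity

/-- Continuity of `dQdx h`. -/
lemma dQdx_continuous {h : ℝ} (hh : 0 < h) : Continuous (dQdx h) := by
  unfold dQdx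
  refine Continuous.div (by continuity) (by continuity) (fun x => ?_)
  positivity

/-- Bound for `dPdx h`. -/
lemma dPdx_bound {h : ℝ} (hh : 0 < h) (x : ℝ) :
    |dPdx h x| ≤ 1 / (Real.pi * h ^ 2) := by
  have hpi := Real.pi_pos
  have hD : (0:ℝ) < x ^ 2 + h ^ 2 := by positivity
  have habs : |dPdx h x| = (1 / Real.pi) * (2 * |x| * h) / (x ^ 2 + h ^ 2) ^ 2 := by
    unfold dPdx
    rw [abs_div, abs_of_pos (by positivity : (0:ℝ) < (x ^ 2 + h ^ 2) ^ 2)]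
    congr 1
    rw [abs_mul, abs_neg, abs_of_pos (by positivity : (0:ℝ) < 1 / Real.pi)]
    congr 1
    rw [abs_mul, abs_mul, abs_of_pos hh, abs_of_pos (by norm_num : (0:ℝ) < 2)]
  rw [habs, div_le_div_iff₀ (by positivity) (by positivity)]
  have h1 : 2 * |x| * h ≤ x ^ 2 + h ^ 2 := by
    nlinarith [sq_nonneg (|x| - h), sq_abs x, abs_nonneg x]
  have h2 : h ^ 2 ≤ x ^ 2 + h ^ 2 := by nlinarith [sq_nonneg x]
  have hx0 : 0 ≤ 2 * |x| * h := by positivity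
  calc (1 / Real.pi) * (2 * |x| * h) * (Real.pi * h ^ 2)
      = (2 * |x| * h) * h ^ 2 := by field_simp
    _ ≤ (x ^ 2 + h ^ 2) * (x ^ 2 + h ^ 2) := by
        exact mul_le_mul h1 h2 (by positivity) (le_of_lt hD)
    _ = 1 * (x ^ 2 + h ^ 2) ^ 2 := by ring

/-- Bound for `dQdx h`. -/
lemma dQdx_bound {h : ℝ} (hh : 0 < h) (x : ℝ) :
    |dQdx h x| ≤ 1 / (Real.pi * h ^ 2) := by
  have hpi := Real.pi_pos
  have hD : (0:ℝ) < x ^ 2 + h ^ 2 := by positivity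
  have habs : |dQdx h x| = (1 / Real.pi) * |h ^ 2 - x ^ 2| / (x ^ 2 + h ^ 2) ^ 2 := by
    unfold dQdx
    rw [abs_div, abs_of_pos (by positivity : (0:ℝ) < (x ^ 2 + h ^ 2) ^ 2), abs_mul,
      abs_of_pos (by positivity : (0:ℝ) < 1 / Real.pi)]
  rw [habs, div_le_div_iff₀ (by positivity) (by positivity)]
  have h1 : |h ^ 2 - x ^ 2| ≤ x ^ 2 + h ^ 2 := by
    rw [abs_le]; constructor <;> nlinarith [sq_nonneg x, sq_nonneg h]
  have h2 : h ^ 2 ≤ x ^ 2 + h ^ 2 := by nlinarith [sq_nonneg x]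
  calc (1 / Real.pi) * |h ^ 2 - x ^ 2| * (Real.pi * h ^ 2)
      = |h ^ 2 - x ^ 2| * h ^ 2 := by field_simp
    _ ≤ (x ^ 2 + h ^ 2) * (x ^ 2 + h ^ 2) := by
        exact mul_le_mul h1 h2 (by positivity) (le_of_lt hD)
    _ = 1 * (x ^ 2 + h ^ 2) ^ 2 := by ring

variable {k : ℝ → ℝ}

lemma integrable_shift_mul (hkc : Continuous k) {B : ℝ} (hB : ∀ x, |k x| ≤ B)
    {f : ℝ → ℝ} (hf : Integrable f volume) (x : ℝ) :
    Integrable (fun t => k (x - t) * f t) volume := by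
  refine (hf.norm.const_mul B).mono' ?_ ?_
  · exact ((hkc.comp (continuous_const.sub continuous_id)).aestronglyMeasurable).mul
      hf.aestronglyMeasurable
  · filter_upwards with t
    rw [norm_mul]
    have : ‖k (x - t)‖ ≤ B := by rw [Real.norm_eq_abs]; exact hB _
    exact mul_le_mul_of_nonneg_right this (norm_nonneg _)

lemma conv_congr_ae {f g : ℝ → ℝ} (hfg : f =ᵐ[volume] g) : conv k f = conv k g := by
  funext x
  refine integral_congr_ae ?_
  filter_upwards [hfg] with t ht
  rw [ht]

lemma conv_continuous (hkc : Continuous k) {B : ℝ} (hB : ∀ x, |k x| ≤ B)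
    {f : ℝ → ℝ} (hf : Integrable f volume) : Continuous (conv k f) := by
  refine continuous_of_dominated (F := fun x t => k (x - t) * f t)
    (bound := fun t => B * ‖f t‖) ?_ ?_ ?_ ?_
  · intro x
    exact ((hkc.comp (continuous_const.sub continuous_id)).aestronglyMeasurable).mul
      hf.aestronglyMeasurable
  · intro x
    filter_upwards with t
    rw [norm_mul]
    have : ‖k (x - t)‖ ≤ B := by rw [Real.norm_eq_abs]; exact hB _
    exact mul_le_mul_of_nonneg_right this (norm_nonneg _)
  · exact hf.norm.const_mul B
  · filter_upwards with t
    exact (hkc.comp (continuous_id.sub continuous_const)).mul continuous_const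

lemma conv_bound (hkc : Continuous k) {B : ℝ} (hB : ∀ x, |k x| ≤ B)
    {f : ℝ → ℝ} (hf : Integrable f volume) (x : ℝ) :
    |conv k f x| ≤ B * ∫ t, |f t| := by
  have h1 : |conv k f x| ≤ ∫ t, |k (x - t)| * |f t| := by
    simpa [conv, Real.norm_eq_abs, abs_mul] using
      norm_integral_le_integral_norm (fun t => k (x - t) * f t) (μ := volume)
  refine h1.trans ?_
  rw [← integral_const_mul]
  refine integral_mono_of_nonneg (Filter.Eventually.of_forall fun t => ?_)
    ((hf.abs).const_mul B) (Filter.Eventually.of_forall fun t => ?_)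
  · exact mul_nonneg (abs_nonneg _) (abs_nonneg _)
  · exact mul_le_mul_of_nonneg_right (hB _) (abs_nonneg _)

lemma indicator_integrable {c d : ℝ} {f : ℝ → ℝ}
    (hf : MemLp f 2 (volume.restrict (Set.Ioo c d))) :
    Integrable ((Set.Ioo c d).indicator f) volume := by
  have h1 : Integrable f (volume.restrict (Set.Ioo c d)) :=
    memLp_one_iff_integrable.mp (hf.mono_exponent (by norm_num))
  rwa [integrable_indicator_iff measurableSet_Ioo]

lemma indicator_congr_ae {s : Set ℝ} (hs : MeasurableSet s) {f g : ℝ → ℝ}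
    (h : f =ᵐ[volume.restrict s] g) : s.indicator f =ᵐ[volume] s.indicator g := by
  rw [Filter.EventuallyEq, ae_restrict_iff' hs] at h
  filter_upwards [h] with x hx
  by_cases hxs : x ∈ s
  · simp [Set.indicator_apply, hxs, hx hxs]
  · simp [Set.indicator_apply, hxs]

/-- L¹-norm of the indicator is controlled by the `L²` norm. -/
lemma int_abs_indicator_le {c d : ℝ} (hcd : c < d)
    (φ : Lp ℝ 2 (volume.restrict (Set.Ioo c d))) :
    ∫ t, |((Set.Ioo c d).indicator ⇑φ) t| ≤ ‖φ‖ * Real.sqrt (d - c) := by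
  have h1 : ∫ t, |((Set.Ioo c d).indicator ⇑φ) t|
      = ∫ t, |⇑φ t| ∂(volume.restrict (Set.Ioo c d)) := by
    rw [← integral_indicator measurableSet_Ioo]
    congr 1
    funext t
    simp [Set.indicator_apply, apply_ite abs]
  have hmem2 : MemLp (fun t => |⇑φ t|) 2 (volume.restrict (Set.Ioo c d)) := by
    simpa [Real.norm_eq_abs] using (Lp.memLp φ).norm
  have hconj : Real.HolderConjugate 2 2 := Real.HolderConjugate.two_two
  have hHolder := integral_mul_le_Lp_mul_Lq_of_nonneg (μ := volume.restrict (Set.Ioo c d)) hconj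
    (f := fun t => |⇑φ t|) (g := fun _ => (1:ℝ))
    (Filter.Eventually.of_forall fun t => abs_nonneg _)
    (Filter.Eventually.of_forall fun _ => zero_le_one)
    (by simpa [ENNReal.ofReal_ofNat] using hmem2)
    (by simpa [ENNReal.ofReal_ofNat] using (memLp_const (μ := volume.restrict (Set.Ioo c d)) (1:ℝ)))
  have hsq : ∀ t, |⇑φ t| ^ (2:ℝ) = ⇑φ t * ⇑φ t := by
    intro t
    rw [show (2:ℝ) = ((2:ℕ):ℝ) by norm_num, Real.rpow_natCast, sq_abs, sq]
  have hnorm : ∫ t, ⇑φ t * ⇑φ t ∂(volume.restrict (Set.Ioo c d)) = ‖φ‖ ^ 2 := by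
    have hinner : (inner ℝ φ φ : ℝ) = ∫ t, ⇑φ t * ⇑φ t ∂(volume.restrict (Set.Ioo c d)) := by
      rw [L2.inner_def]
      refine integral_congr_ae (Filter.Eventually.of_forall fun t => ?_)
      simp [RCLike.inner_apply]; ring
    rw [← hinner, real_inner_self_eq_norm_sq]
  have hμuniv : ((volume.restrict (Set.Ioo c d)) Set.univ).toReal = d - c := by
    rw [Measure.restrict_apply_univ, Real.volume_Ioo,
      ENNReal.toReal_ofReal (by linarith)]
  have hint1 : ∫ t, (1:ℝ) ^ (2:ℝ) ∂(volume.restrict (Set.Ioo c d)) = d - c := by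
    simp only [Real.one_rpow]
    rw [integral_const, smul_eq_mul, mul_one, measureReal_def, hμuniv]
  calc ∫ t, |((Set.Ioo c d).indicator ⇑φ) t|
      = ∫ t, |⇑φ t| * 1 ∂(volume.restrict (Set.Ioo c d)) := by rw [h1]; simp
    _ ≤ (∫ t, |⇑φ t| ^ (2:ℝ) ∂(volume.restrict (Set.Ioo c d))) ^ ((1:ℝ)/2) * (∫ t, (1:ℝ) ^ (2:ℝ) ∂(volume.restrict (Set.Ioo c d))) ^ ((1:ℝ)/2) := hHolder
    _ = ‖φ‖ * Real.sqrt (d - c) := by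
        rw [hint1]
        have : ∫ t, |⇑φ t| ^ (2:ℝ) ∂(volume.restrict (Set.Ioo c d)) = ‖φ‖ ^ 2 := by
          rw [← hnorm]
          exact integral_congr_ae (Filter.Eventually.of_forall fun t => hsq t)
        rw [this, ← Real.sqrt_eq_rpow, ← Real.sqrt_eq_rpow, Real.sqrt_sq (norm_nonneg φ)]

/-- The convolution operator `φ ↦ conv k (𝟙_K φ)` as a continuous linear map
`L²(K) → L²(S)`. -/
lemma exists_convCLM (a b c d : ℝ) (hab : a < b) (hcd : c < d)
    (k : ℝ → ℝ) (hkc : Continuous k) (B : ℝ) (hB : ∀ x, |k x| ≤ B) :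
    ∃ T : Lp ℝ 2 (volume.restrict (Set.Ioo c d)) →L[ℝ] Lp ℝ 2 (volume.restrict (Set.Ioo a b)),
      ∀ φ, ⇑(T φ) =ᵐ[volume.restrict (Set.Ioo a b)]
        conv k ((Set.Ioo c d).indicator ⇑φ) := by
  have hB0 : 0 ≤ B := le_trans (abs_nonneg _) (hB 0)
  have hint : ∀ φ : Lp ℝ 2 (volume.restrict (Set.Ioo c d)), Integrable ((Set.Ioo c d).indicator ⇑φ) volume :=
    fun φ => indicator_integrable (Lp.memLp φ)
  have hbd : ∀ (φ : Lp ℝ 2 (volume.restrict (Set.Ioo c d))) x, ‖conv k ((Set.Ioo c d).indicator ⇑φ) x‖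
      ≤ B * ∫ t, |((Set.Ioo c d).indicator ⇑φ) t| := by
    intro φ x
    rw [Real.norm_eq_abs]
    exact conv_bound hkc hB (hint φ) x
  have hmem : ∀ φ : Lp ℝ 2 (volume.restrict (Set.Ioo c d)), MemLp (conv k ((Set.Ioo c d).indicator ⇑φ)) 2 (volume.restrict (Set.Ioo a b)) :=
    fun φ => MemLp.of_bound ((conv_continuous hkc hB (hint φ)).aestronglyMeasurable)
      _ (Filter.Eventually.of_forall (hbd φ))
  refine ⟨LinearMap.mkContinuous
    { toFun := fun φ => (hmem φ).toLp _
      map_add' := ?_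
      map_smul' := ?_ } (Real.sqrt (b - a) * (B * Real.sqrt (d - c))) ?_,
    fun φ => (hmem φ).coeFn_toLp⟩
  · intro φ φ'
    have h1 : (Set.Ioo c d).indicator ⇑(φ + φ') =ᵐ[volume]
        fun t => (Set.Ioo c d).indicator ⇑φ t + (Set.Ioo c d).indicator ⇑φ' t := by
      refine (indicator_congr_ae measurableSet_Ioo (Lp.coeFn_add φ φ')).trans
        (Filter.Eventually.of_forall fun t => ?_)
      by_cases ht : t ∈ Set.Ioo c d <;> simp [Set.indicator_apply, ht]
    have h2 : conv k ((Set.Ioo c d).indicator ⇑(φ + φ'))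
        = fun x => conv k ((Set.Ioo c d).indicator ⇑φ) x
          + conv k ((Set.Ioo c d).indicator ⇑φ') x := by
      rw [conv_congr_ae h1]
      funext x
      unfold conv
      rw [← integral_add (integrable_shift_mul hkc hB (hint φ) x)
        (integrable_shift_mul hkc hB (hint φ') x)]
      refine integral_congr_ae (Filter.Eventually.of_forall fun t => ?_)
      ring
    show (hmem (φ + φ')).toLp _ = (hmem φ).toLp _ + (hmem φ').toLp _
    rw [MemLp.toLp_congr (hmem (φ + φ')) ((hmem φ).add (hmem φ')) (by rw [h2]; rfl)]
    exact MemLp.toLp_add _ _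
  · intro r φ
    have h1 : (Set.Ioo c d).indicator ⇑(r • φ) =ᵐ[volume]
        fun t => r * (Set.Ioo c d).indicator ⇑φ t := by
      refine (indicator_congr_ae measurableSet_Ioo (Lp.coeFn_smul r φ)).trans
        (Filter.Eventually.of_forall fun t => ?_)
      by_cases ht : t ∈ Set.Ioo c d <;> simp [Set.indicator_apply, ht]
    have h2 : conv k ((Set.Ioo c d).indicator ⇑(r • φ))
        = fun x => r * conv k ((Set.Ioo c d).indicator ⇑φ) x := by
      rw [conv_congr_ae h1]
      funext x
      unfold conv
      rw [← integral_const_mul]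
      refine integral_congr_ae (Filter.Eventually.of_forall fun t => ?_)
      ring
    simp only [RingHom.id_apply]
    show (hmem (r • φ)).toLp _ = r • (hmem φ).toLp _
    rw [MemLp.toLp_congr (hmem (r • φ)) ((hmem φ).const_smul r)
      (by rw [h2]; rfl)]
    exact MemLp.toLp_const_smul _ _
  · intro φ
    show ‖(hmem φ).toLp _‖ ≤ _
    rw [Lp.norm_toLp]
    set I := ∫ t, |((Set.Ioo c d).indicator ⇑φ) t| with hI
    have hI0 : 0 ≤ I := integral_nonneg fun t => abs_nonneg _
    have hb1 : eLpNorm (conv k ((Set.Ioo c d).indicator ⇑φ)) 2 (volume.restrict (Set.Ioo a b))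
        ≤ (volume.restrict (Set.Ioo a b)) Set.univ ^ ((2:ℝ≥0∞).toReal)⁻¹
          * ENNReal.ofReal (B * I) :=
      eLpNorm_le_of_ae_bound (Filter.Eventually.of_forall (hbd φ))
    have hμS : (volume.restrict (Set.Ioo a b)) Set.univ = ENNReal.ofReal (b - a) := by
      rw [Measure.restrict_apply_univ, Real.volume_Ioo]
    have hRHSne : (volume.restrict (Set.Ioo a b)) Set.univ ^ ((2:ℝ≥0∞).toReal)⁻¹
        * ENNReal.ofReal (B * I) ≠ ⊤ := by
      refine ENNReal.mul_ne_top ?_ ENNReal.ofReal_ne_top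
      rw [hμS]
      exact ENNReal.rpow_ne_top_of_nonneg (by norm_num) ENNReal.ofReal_ne_top
    have h3 := ENNReal.toReal_mono hRHSne hb1
    refine h3.trans ?_
    rw [ENNReal.toReal_mul, hμS, ← ENNReal.toReal_rpow,
      ENNReal.toReal_ofReal (by linarith), ENNReal.toReal_ofReal (by positivity)]
    have hpow : (b - a) ^ ((2:ℝ≥0∞).toReal)⁻¹ = Real.sqrt (b - a) := by
      rw [Real.sqrt_eq_rpow]
      norm_num
    rw [hpow]
    have hIle : I ≤ ‖φ‖ * Real.sqrt (d - c) := int_abs_indicator_le hcd φ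
    calc Real.sqrt (b - a) * (B * I)
        ≤ Real.sqrt (b - a) * (B * (‖φ‖ * Real.sqrt (d - c))) := by gcongr
      _ = Real.sqrt (b - a) * (B * Real.sqrt (d - c)) * ‖φ‖ := by ring

/-- Weak limit of a bounded family along an ultrafilter, in a real Hilbert space. -/
lemma exists_weak_limit {H : Type*} [NormedAddCommGroup H] [InnerProductSpace ℝ H]
    [CompleteSpace H] (U : Ultrafilter ℕ) (x : ℕ → H) (C : ℝ)
    (hbdd : {n | ‖x n‖ ≤ C} ∈ U) :
    ∃ ψ : H, ∀ y : H,
      Filter.Tendsto (fun n => (inner ℝ (x n) y : ℝ)) ↑U (𝓝 (inner ℝ ψ y)) := by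
  have hC0 : 0 ≤ C := by
    obtain ⟨n, hn⟩ := Ultrafilter.nonempty_of_mem hbdd
    exact le_trans (norm_nonneg _) hn
  have hex : ∀ y : H, ∃ r : ℝ,
      Filter.Tendsto (fun n => (inner ℝ (x n) y : ℝ)) ↑U (𝓝 r) := by
    intro y
    have hmem : {n | (inner ℝ (x n) y : ℝ) ∈ Set.Icc (-(C * ‖y‖)) (C * ‖y‖)} ∈ U := by
      filter_upwards [hbdd] with n hn
      have h1 : |(inner ℝ (x n) y : ℝ)| ≤ C * ‖y‖ := by
        refine (abs_real_inner_le_norm (x n) y).trans ?_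
        exact mul_le_mul_of_nonneg_right hn (norm_nonneg _)
      exact abs_le.mp h1
    obtain ⟨r, -, hr⟩ := isCompact_Icc.ultrafilter_le_nhds
      (U.map fun n => (inner ℝ (x n) y : ℝ)) (by rwa [Ultrafilter.coe_map, le_principal_iff,
        mem_map])
    exact ⟨r, hr⟩
  choose L hL using hex
  have hadd : ∀ y z : H, L (y + z) = L y + L z := by
    intro y z
    refine tendsto_nhds_unique ?_ ((hL y).add (hL z))
    have : (fun n => (inner ℝ (x n) (y + z) : ℝ))
        = fun n => (inner ℝ (x n) y : ℝ) + (inner ℝ (x n) z : ℝ) := by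
      funext n; rw [inner_add_right]
    rw [← this]
    exact hL (y + z)
  have hsmul : ∀ (r : ℝ) (y : H), L (r • y) = r * L y := by
    intro r y
    refine tendsto_nhds_unique ?_ ((hL y).const_mul r)
    have : (fun n => (inner ℝ (x n) (r • y) : ℝ))
        = fun n => r * (inner ℝ (x n) y : ℝ) := by
      funext n; rw [real_inner_smul_right]
    rw [← this]
    exact hL (r • y)
  have hbound : ∀ y : H, |L y| ≤ C * ‖y‖ := by
    intro y
    refine le_of_tendsto (hL y).abs ?_
    filter_upwards [hbdd] with n hn
    refine (abs_real_inner_le_norm (x n) y).trans ?_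
    exact mul_le_mul_of_nonneg_right hn (norm_nonneg _)
  let L' : H →ₗ[ℝ] ℝ :=
    { toFun := L, map_add' := hadd, map_smul' := hsmul }
  let Lc : H →L[ℝ] ℝ := LinearMap.mkContinuous L' C
    (fun y => by simpa [Real.norm_eq_abs, L'] using hbound y)
  refine ⟨(InnerProductSpace.toDual ℝ H).symm Lc, fun y => ?_⟩
  have hψ : (inner ℝ ((InnerProductSpace.toDual ℝ H).symm Lc) y : ℝ) = Lc y :=
    InnerProductSpace.toDual_symm_apply
  rw [hψ]
  exact hL y

end Aux

/-- Ill-posedness of the unconstrained problem: if `e = (e₁,e₂) ∉ Ran b₂*` and `(φₙ)` is a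
sequence in `L²(K)` with `‖b₂*[φₙ] − e‖_{L²(S,ℝ²)} → 0`, then `‖φₙ‖_{L²(K)} → ∞`.
Here `S = (a,b)`, `K = (c,d)`. -/
theorem stmt16 (a b c d h : ℝ) (hab : a < b) (hcd : c < d) (hh : 0 < h)
    (e₁ e₂ : ℝ → ℝ) (he₁ : MemLp e₁ 2 (volume.restrict (Set.Ioo a b)))
    (he₂ : MemLp e₂ 2 (volume.restrict (Set.Ioo a b)))
    (hnr : ¬ ∃ ψ : Lp ℝ 2 (volume.restrict (Set.Ioo c d)),
      e₁ =ᵐ[volume.restrict (Set.Ioo a b)] conv (dPdx h) ((Set.Ioo c d).indicator ⇑ψ) ∧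
      e₂ =ᵐ[volume.restrict (Set.Ioo a b)] conv (dQdx h) ((Set.Ioo c d).indicator ⇑ψ))
    (φn : ℕ → Lp ℝ 2 (volume.restrict (Set.Ioo c d)))
    (hconv : Filter.Tendsto
      (fun n => ((eLpNorm (fun t => conv (dPdx h) ((Set.Ioo c d).indicator ⇑(φn n)) t - e₁ t) 2
            (volume.restrict (Set.Ioo a b))) ^ 2
          + (eLpNorm (fun t => conv (dQdx h) ((Set.Ioo c d).indicator ⇑(φn n)) t - e₂ t) 2
            (volume.restrict (Set.Ioo a b))) ^ 2) ^ (1/2 : ℝ))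
      Filter.atTop (nhds 0)) :
    Filter.Tendsto (fun n => ‖φn n‖) Filter.atTop Filter.atTop := by
  classical
  by_contra hdiv
  -- extract a bound along an ultrafilter
  rw [Filter.tendsto_atTop] at hdiv
  push_neg at hdiv
  obtain ⟨C, hC⟩ := hdiv
  simp only [← not_le] at hC
  have hne : ((Filter.atTop : Filter ℕ) ⊓ 𝓟 {n | ¬ C ≤ ‖φn n‖}).NeBot :=
    Filter.frequently_iff_neBot.mp hC
  set U := Ultrafilter.of ((Filter.atTop : Filter ℕ) ⊓ 𝓟 {n | ¬ C ≤ ‖φn n‖})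
  have hUle : ↑U ≤ (Filter.atTop : Filter ℕ) ⊓ 𝓟 {n | ¬ C ≤ ‖φn n‖} :=
    Ultrafilter.of_le _
  have hUtop : ↑U ≤ (Filter.atTop : Filter ℕ) := hUle.trans inf_le_left
  have hbdd : {n | ‖φn n‖ ≤ C} ∈ U := by
    have h1 : {n | ¬ C ≤ ‖φn n‖} ∈ U :=
      (hUle.trans inf_le_right) (Filter.mem_principal_self _)
    filter_upwards [h1] with n hn
    exact le_of_lt (lt_of_not_ge hn)
  -- the two convolution operators
  obtain ⟨TP, hTP⟩ := exists_convCLM a b c d hab hcd (dPdx h) (dPdx_continuous hh)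
    (1 / (Real.pi * h ^ 2)) (dPdx_bound hh)
  obtain ⟨TQ, hTQ⟩ := exists_convCLM a b c d hab hcd (dQdx h) (dQdx_continuous hh)
    (1 / (Real.pi * h ^ 2)) (dQdx_bound hh)
  -- weak limit
  obtain ⟨ψ, hψ⟩ := exists_weak_limit U (fun n => φn n) C hbdd
  -- componentwise convergence of the eLpNorms
  set AP := fun n => eLpNorm
    (fun t => conv (dPdx h) ((Set.Ioo c d).indicator ⇑(φn n)) t - e₁ t) 2 (volume.restrict (Set.Ioo a b)) with hAPdef
  set AQ := fun n => eLpNorm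
    (fun t => conv (dQdx h) ((Set.Ioo c d).indicator ⇑(φn n)) t - e₂ t) 2 (volume.restrict (Set.Ioo a b)) with hAQdef
  have hroot : ∀ x y : ℝ≥0∞, x ≤ ((x ^ 2 + y ^ 2) ^ (1/2 : ℝ)) := by
    intro x y
    have hx : (x ^ (2:ℕ) : ℝ≥0∞) ^ (1/2 : ℝ) = x := by
      rw [← ENNReal.rpow_natCast x 2, ← ENNReal.rpow_mul]
      norm_num
    calc x = (x ^ (2:ℕ) : ℝ≥0∞) ^ (1/2 : ℝ) := hx.symm
      _ ≤ ((x ^ 2 + y ^ 2) ^ (1/2 : ℝ)) := ENNReal.rpow_le_rpow le_self_add (by norm_num)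
  have hAP : Filter.Tendsto AP Filter.atTop (𝓝 0) := by
    refine tendsto_of_tendsto_of_tendsto_of_le_of_le tendsto_const_nhds hconv
      (fun n => zero_le) (fun n => hroot (AP n) (AQ n))
  have hAQ : Filter.Tendsto AQ Filter.atTop (𝓝 0) := by
    refine tendsto_of_tendsto_of_tendsto_of_le_of_le tendsto_const_nhds hconv
      (fun n => zero_le) (fun n => by
        have := hroot (AQ n) (AP n)
        rwa [add_comm] at this)
  -- strong convergence TP (φn n) → eP, TQ (φn n) → eQ
  set eP := he₁.toLp e₁ with hePdef
  set eQ := he₂.toLp e₂ with heQdef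
  have hnormP : ∀ n, ‖TP (φn n) - eP‖ = (AP n).toReal := by
    intro n
    rw [Lp.norm_def]
    congr 1
    refine eLpNorm_congr_ae ?_
    filter_upwards [Lp.coeFn_sub (TP (φn n)) eP, hTP (φn n), he₁.coeFn_toLp] with t h1 h2 h3
    rw [h1]
    simp only [Pi.sub_apply]
    rw [h2, h3]
  have hnormQ : ∀ n, ‖TQ (φn n) - eQ‖ = (AQ n).toReal := by
    intro n
    rw [Lp.norm_def]
    congr 1
    refine eLpNorm_congr_ae ?_
    filter_upwards [Lp.coeFn_sub (TQ (φn n)) eQ, hTQ (φn n), he₂.coeFn_toLp] with t h1 h2 h3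
    rw [h1]
    simp only [Pi.sub_apply]
    rw [h2, h3]
  have hTPconv : Filter.Tendsto (fun n => TP (φn n)) Filter.atTop (𝓝 eP) := by
    rw [tendsto_iff_norm_sub_tendsto_zero]
    have : (fun n => ‖TP (φn n) - eP‖) = fun n => (AP n).toReal := funext hnormP
    rw [this]
    have := (ENNReal.tendsto_toReal (a := 0) (by simp)).comp hAP
    exact this
  have hTQconv : Filter.Tendsto (fun n => TQ (φn n)) Filter.atTop (𝓝 eQ) := by
    rw [tendsto_iff_norm_sub_tendsto_zero]
    have : (fun n => ‖TQ (φn n) - eQ‖) = fun n => (AQ n).toReal := funext hnormQ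
    rw [this]
    have := (ENNReal.tendsto_toReal (a := 0) (by simp)).comp hAQ
    exact this
  -- identify the weak limit: TP ψ = eP and TQ ψ = eQ
  have hTPψ : TP ψ = eP := by
    refine ext_inner_right ℝ fun w => ?_
    have t1 : Filter.Tendsto (fun n => (inner ℝ (TP (φn n)) w : ℝ)) ↑U (𝓝 (inner ℝ eP w)) :=
      ((hTPconv.inner tendsto_const_nhds).mono_left hUtop)
    have t2 : Filter.Tendsto (fun n => (inner ℝ (TP (φn n)) w : ℝ)) ↑U (𝓝 (inner ℝ (TP ψ) w)) := by
      have heq : ∀ n, (inner ℝ (TP (φn n)) w : ℝ)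
          = (inner ℝ (φn n) (ContinuousLinearMap.adjoint TP w) : ℝ) := by
        intro n
        rw [ContinuousLinearMap.adjoint_inner_right]
      have heq2 : (inner ℝ (TP ψ) w : ℝ)
          = (inner ℝ ψ (ContinuousLinearMap.adjoint TP w) : ℝ) := by
        rw [ContinuousLinearMap.adjoint_inner_right]
      rw [show (fun n => (inner ℝ (TP (φn n)) w : ℝ))
          = fun n => (inner ℝ (φn n) (ContinuousLinearMap.adjoint TP w) : ℝ) from funext heq,
        heq2]
      exact hψ (ContinuousLinearMap.adjoint TP w)
    exact tendsto_nhds_unique t2 t1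
  have hTQψ : TQ ψ = eQ := by
    refine ext_inner_right ℝ fun w => ?_
    have t1 : Filter.Tendsto (fun n => (inner ℝ (TQ (φn n)) w : ℝ)) ↑U (𝓝 (inner ℝ eQ w)) :=
      ((hTQconv.inner tendsto_const_nhds).mono_left hUtop)
    have t2 : Filter.Tendsto (fun n => (inner ℝ (TQ (φn n)) w : ℝ)) ↑U (𝓝 (inner ℝ (TQ ψ) w)) := by
      have heq : ∀ n, (inner ℝ (TQ (φn n)) w : ℝ)
          = (inner ℝ (φn n) (ContinuousLinearMap.adjoint TQ w) : ℝ) := by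
        intro n
        rw [ContinuousLinearMap.adjoint_inner_right]
      have heq2 : (inner ℝ (TQ ψ) w : ℝ)
          = (inner ℝ ψ (ContinuousLinearMap.adjoint TQ w) : ℝ) := by
        rw [ContinuousLinearMap.adjoint_inner_right]
      rw [show (fun n => (inner ℝ (TQ (φn n)) w : ℝ))
          = fun n => (inner ℝ (φn n) (ContinuousLinearMap.adjoint TQ w) : ℝ) from funext heq,
        heq2]
      exact hψ (ContinuousLinearMap.adjoint TQ w)
    exact tendsto_nhds_unique t2 t1
  -- contradiction with hnr
  refine hnr ⟨ψ, ?_, ?_⟩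
  · refine (he₁.coeFn_toLp.symm).trans ?_
    rw [← hePdef, ← hTPψ]
    exact hTP ψ
  · refine (he₂.coeFn_toLp.symm).trans ?_
    rw [← heQdef, ← hTQψ]
    exact hTQ ψ
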